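/- For any g ∈ GL(d,ℝ) and any unit vector v ∈ ℝ^d, the gap distance from the projective point g·v̄ to the direction of maximum growth u(g) satisfies d(u(g), gv) ≤ (a₂(g)/a₁(g)) · (‖g‖/‖gv‖). -/

import Mathlib

open scoped RealInnerProductSpace
open Filter

noncomputable section

/-- Euclidean space `ℝ^d`. -/
abbrev E (d : ℕ) := EuclideanSpace ℝ (Fin d)

/-- The operator norm of a `d × d` real matrix, acting on Euclidean space. -/
def opNorm {d : ℕ} (g : Matrix (Fin d) (Fin d) ℝ) : ℝ :=
  ‖(Matrix.toEuclideanLin g).toContinuousLinearMap‖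

/-- The action of a matrix on a Euclidean vector. -/
def act {d : ℕ} (g : Matrix (Fin d) (Fin d) ℝ) (v : E d) : E d :=
  Matrix.toEuclideanLin g v

/-- The norm of `v ∧ w` in `Λ² ℝ^d`. -/
def wedgeNorm {d : ℕ} (v w : E d) : ℝ :=
  Real.sqrt (‖v‖ ^ 2 * ‖w‖ ^ 2 - ⟪v, w⟫ ^ 2)

/-- The gap distance `d(v̄, w̄) = ‖v ∧ w‖ / (‖v‖ ‖w‖)` on projective space. -/
def gapDist {d : ℕ} (v w : E d) : ℝ := wedgeNorm v w / (‖v‖ * ‖w‖)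

/-- The operator norm of `Λ² g`, computed on the decomposable generators coming from
orthonormal pairs. -/
def lam2Norm {d : ℕ} (g : Matrix (Fin d) (Fin d) ℝ) : ℝ :=
  sSup {r | ∃ v w : E d, ‖v‖ = 1 ∧ ‖w‖ = 1 ∧ ⟪v, w⟫ = 0 ∧
    r = wedgeNorm (act g v) (act g w)}

/-- Spectral radius: the maximal absolute value of the complex eigenvalues. -/
def specRad {d : ℕ} (g : Matrix (Fin d) (Fin d) ℝ) : ℝ :=
  sSup ((fun z : ℂ => ‖z‖) '' spectrum ℂ (g.map (algebraMap ℝ ℂ)))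

/-- Singular value decomposition data: `g = L Δ R` with `L, R` orthogonal and
`Δ = diagonal a`, the `a i` positive and in decreasing order (so `a i = a_{i+1}(g)`). -/
structure SVD {d : ℕ} (g : Matrix (Fin d) (Fin d) ℝ) (L : Matrix (Fin d) (Fin d) ℝ)
    (a : Fin d → ℝ) (R : Matrix (Fin d) (Fin d) ℝ) : Prop where
  orthL : L * L.transpose = 1
  orthR : R * R.transpose = 1
  anti : Antitone a
  pos : ∀ i, 0 < a i
  eq : g = L * Matrix.diagonal a * R

/-- The `i`-th standard basis vector of `ℝ^d`. -/
def stdVec {d : ℕ} (i : Fin d) : E d := EuclideanSpace.single i 1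

lemma act_apply {d : ℕ} (g : Matrix (Fin d) (Fin d) ℝ) (v : E d) (i : Fin d) :
    act g v i = g.mulVec (fun j => v j) i := rfl

lemma act_mul {d : ℕ} (A B : Matrix (Fin d) (Fin d) ℝ) (v : E d) :
    act (A * B) v = act A (act B v) := by
  ext i
  simp [act_apply, Matrix.mulVec_mulVec]

lemma inner_euclid {d : ℕ} (x y : E d) : ⟪x, y⟫ = ∑ i, x i * y i := by
  simp [PiLp.inner_apply]
  exact Finset.sum_congr rfl fun i _ => mul_comm _ _

lemma inner_act_act {d : ℕ} {L : Matrix (Fin d) (Fin d) ℝ} (hL : L * L.transpose = 1)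
    (x y : E d) : ⟪act L x, act L y⟫ = ⟪x, y⟫ := by
  have hL' : L.transpose * L = 1 := mul_eq_one_comm.mp hL
  rw [inner_euclid, inner_euclid]
  have h1 : ∑ i, act L x i * act L y i =
      dotProduct (L.mulVec fun j => x j) (L.mulVec fun j => y j) := rfl
  rw [h1, Matrix.dotProduct_mulVec, Matrix.vecMul_mulVec, hL', Matrix.vecMul_one]
  rfl

lemma norm_act {d : ℕ} {L : Matrix (Fin d) (Fin d) ℝ} (hL : L * L.transpose = 1)
    (x : E d) : ‖act L x‖ = ‖x‖ := by
  have := inner_act_act hL x x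
  rw [real_inner_self_eq_norm_sq, real_inner_self_eq_norm_sq] at this
  nlinarith [norm_nonneg (act L x), norm_nonneg x]

/-- For `g ∈ GL(d,ℝ)` with SVD `g = L Δ R` and any unit vector `v`, the gap distance from
`g·v̄` to the direction of maximum growth `u(g) = [L e₁]` satisfies
`d(u(g), gv) ≤ (a₂(g)/a₁(g)) · (‖g‖/‖gv‖)`. -/
theorem stmt_2 {d : ℕ} (hd : 2 ≤ d) (g L R : Matrix (Fin d) (Fin d) ℝ)
    (hg : IsUnit g) (a : Fin d → ℝ) (h : SVD g L a R) (v : E d) (hv : ‖v‖ = 1) :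
    gapDist (act L (stdVec ⟨0, by omega⟩)) (act g v) ≤
      (a ⟨1, by omega⟩ / a ⟨0, by omega⟩) * (opNorm g / ‖act g v‖) := by
  set i0 : Fin d := ⟨0, by omega⟩
  set i1 : Fin d := ⟨1, by omega⟩
  set w : E d := act R v with hw
  set Δ : Matrix (Fin d) (Fin d) ℝ := Matrix.diagonal a with hΔ
  have hwnorm : ‖w‖ = 1 := by rw [hw, norm_act h.orthR, hv]
  have hgv : act g v = act L (act Δ w) := by
    rw [h.eq, act_mul, act_mul]
  -- stdVec norm
  have hstd : ∀ i : Fin d, ‖stdVec i‖ = 1 := fun i => by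
    simp [stdVec]
  have hΔapp : ∀ (x : E d) (i : Fin d), act Δ x i = a i * x i := by
    intro x i
    simp [act_apply, hΔ, Matrix.mulVec_diagonal]
  -- norm of act g v
  have hnormgv : ‖act g v‖ = ‖act Δ w‖ := by rw [hgv, norm_act h.orthL]
  have hgvpos : 0 < ‖act g v‖ := by
    rcases eq_or_lt_of_le (norm_nonneg (act g v)) with h0 | h0
    · exfalso
      have h0' : act Δ w = 0 := by
        have h0'' : ‖act Δ w‖ = 0 := by rw [← hnormgv, ← h0]
        exact norm_eq_zero.mp h0''
      have hw0 : w = 0 := by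
        ext i
        have h2 : act Δ w i = 0 := by rw [h0']; rfl
        rw [hΔapp] at h2
        have := (mul_eq_zero.mp h2).resolve_left (h.pos i).ne'
        simpa using this
      rw [hw0, norm_zero] at hwnorm; norm_num at hwnorm
    · exact h0
  -- inner product computation
  have hinner : ⟪act L (stdVec i0), act g v⟫ = a i0 * w i0 := by
    rw [hgv, inner_act_act h.orthL, inner_euclid]
    rw [Finset.sum_eq_single i0]
    · simp [stdVec, hΔapp, EuclideanSpace.single_apply]
    · intro b _ hb
      simp [stdVec, EuclideanSpace.single_apply, hb]
    · simp
  -- norm² of act Δ w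
  have hnormsq : ‖act Δ w‖ ^ 2 = ∑ i, (a i * w i) ^ 2 := by
    rw [← real_inner_self_eq_norm_sq, inner_euclid]
    exact Finset.sum_congr rfl fun i _ => by rw [hΔapp, sq]
  -- wedgeNorm bound
  have hwedge : wedgeNorm (act L (stdVec i0)) (act g v) ≤ a i1 := by
    rw [wedgeNorm, norm_act h.orthL, hstd, hinner, hnormgv, hnormsq]
    have key : (1:ℝ) ^ 2 * (∑ i, (a i * w i) ^ 2) - (a i0 * w i0) ^ 2 ≤ a i1 ^ 2 := by
      rw [one_pow, one_mul]
      have hsplit : ∑ i, (a i * w i) ^ 2 =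
          (a i0 * w i0) ^ 2 + ∑ i ∈ Finset.univ.erase i0, (a i * w i) ^ 2 := by
        exact (Finset.add_sum_erase _ _ (Finset.mem_univ i0)).symm
      rw [hsplit]
      have h1 : ∑ i ∈ Finset.univ.erase i0, (a i * w i) ^ 2 ≤
          ∑ i ∈ Finset.univ.erase i0, a i1 ^ 2 * w i ^ 2 := by
        apply Finset.sum_le_sum
        intro i hi
        have hi0 : i ≠ i0 := (Finset.mem_erase.mp hi).1
        have h10 : i1 ≤ i := by
          have : (1:ℕ) ≤ i.val := by
            rcases Nat.eq_zero_or_pos i.val with h' | h'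
            · exact absurd (Fin.ext h') hi0
            · exact h'
          exact this
        have hai : a i ≤ a i1 := h.anti h10
        have hp := (h.pos i).le
        rw [mul_pow]
        have hsq : a i ^ 2 ≤ a i1 ^ 2 := by nlinarith
        nlinarith [sq_nonneg (w i)]
      have h2 : ∑ i ∈ Finset.univ.erase i0, a i1 ^ 2 * w i ^ 2 =
          a i1 ^ 2 * ∑ i ∈ Finset.univ.erase i0, w i ^ 2 := by
        rw [Finset.mul_sum]
      have h3 : ∑ i ∈ Finset.univ.erase i0, w i ^ 2 ≤ 1 := by
        have : ∑ i ∈ Finset.univ.erase i0, w i ^ 2 ≤ ∑ i, w i ^ 2 :=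
          Finset.sum_le_sum_of_subset_of_nonneg (Finset.subset_univ _)
            (fun i _ _ => sq_nonneg _)
        have hws : ∑ i, w i ^ 2 = 1 := by
          have := real_inner_self_eq_norm_sq w
          rw [inner_euclid, hwnorm] at this
          simpa [sq] using this
        linarith
      nlinarith [sq_nonneg (a i1), (h.pos i1).le]
    calc Real.sqrt ((1:ℝ)^2 * (∑ i, (a i * w i) ^ 2) - (a i0 * w i0) ^ 2)
        ≤ Real.sqrt (a i1 ^ 2) := Real.sqrt_le_sqrt key
      _ = a i1 := Real.sqrt_sq (h.pos i1).le
  -- opNorm ≥ a i0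
  have hop : a i0 ≤ opNorm g := by
    set x : E d := act R.transpose (stdVec i0) with hx
    have hxnorm : ‖x‖ = 1 := by
      have hRt : R.transpose * R.transpose.transpose = 1 := by
        rw [Matrix.transpose_transpose]
        exact mul_eq_one_comm.mp h.orthR
      rw [hx, norm_act hRt, hstd]
    have hgx : act g x = act L (act Δ (stdVec i0)) := by
      rw [h.eq, act_mul, act_mul, hx, ← act_mul R, h.orthR]
      congr 2
      ext i
      simp [act_apply, Matrix.one_mulVec]
    have hΔe : act Δ (stdVec i0) = a i0 • stdVec i0 := by
      ext i
      rw [hΔapp]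
      simp only [stdVec, PiLp.smul_apply, EuclideanSpace.single_apply, smul_eq_mul]
      by_cases hi : i = i0 <;> simp [hi]
    have hgxnorm : ‖act g x‖ = a i0 := by
      rw [hgx, norm_act h.orthL, hΔe, norm_smul, hstd]
      simp [abs_of_pos (h.pos i0)]
    have hle : ‖act g x‖ ≤ opNorm g * ‖x‖ := by
      have : act g x = (Matrix.toEuclideanLin g).toContinuousLinearMap x := rfl
      rw [this]
      exact (Matrix.toEuclideanLin g).toContinuousLinearMap.le_opNorm x
    rw [hgxnorm, hxnorm, mul_one] at hle
    exact hle
  -- final algebra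
  rw [gapDist, norm_act h.orthL, hstd, one_mul]
  have ha0 := h.pos i0
  have ha1 := h.pos i1
  calc wedgeNorm (act L (stdVec i0)) (act g v) / ‖act g v‖
      ≤ a i1 / ‖act g v‖ := by
        gcongr
    _ ≤ (a i1 / a i0) * (opNorm g / ‖act g v‖) := by
        rw [div_mul_div_comm, div_le_div_iff₀ hgvpos (by positivity)]
        nlinarith [mul_nonneg (mul_nonneg ha1.le hgvpos.le) (sub_nonneg.mpr hop)]
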